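/- For nonnegative reals $w_1,\dots,w_n$ (weights) and $\alpha_1,\dots,\alpha_n$ (ratios), and any partition of $\{1,\dots,n\}$ into disjoint sets $A$ and $B$: $\sum_{i,j\in A, j\ge i} w_i w_j \min(\alpha_i,\alpha_j) + \sum_{i,j\in B, j\ge i} w_i w_j \min(\alpha_i,\alpha_j) \ge \sum_{i\in A, j\in B} w_i w_j \min(\alpha_i,\alpha_j)$. -/

import Mathlib

open Finset

lemma min_kernel_psd {n : ℕ} (s : Finset (Fin n)) :
    ∀ (α v : Fin n → ℝ), (∀ i ∈ s, 0 ≤ α i) →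
    0 ≤ ∑ i ∈ s, ∑ j ∈ s, v i * v j * min (α i) (α j) := by
  induction s using Finset.strongInduction with
  | _ s ih =>
    intro α v hα
    rcases s.eq_empty_or_nonempty with rfl | hne
    · simp
    obtain ⟨m, hm, hmin⟩ := s.exists_min_image α hne
    have key : ∀ i j, min (α i) (α j) = α m + min (α i - α m) (α j - α m) := by
      intro i j
      rw [min_sub_sub_right]; ring
    have split : (∑ i ∈ s, ∑ j ∈ s, v i * v j * min (α i) (α j)) =
        (α m) * (∑ i ∈ s, v i)^2 +
        ∑ i ∈ s, ∑ j ∈ s, v i * v j * min (α i - α m) (α j - α m) := by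
      rw [sq, Finset.sum_mul_sum, Finset.mul_sum]
      rw [← Finset.sum_add_distrib]
      refine Finset.sum_congr rfl fun i hi => ?_
      rw [Finset.mul_sum, ← Finset.sum_add_distrib]
      refine Finset.sum_congr rfl fun j hj => ?_
      rw [key i j]; ring
    rw [split]
    have h1 : 0 ≤ (α m) * (∑ i ∈ s, v i)^2 :=
      mul_nonneg (hα m hm) (sq_nonneg _)
    have hz : ∀ i ∈ s, v i * v m * min (α i - α m) (α m - α m) = 0 := by
      intro i hi
      have : min (α i - α m) (α m - α m) = 0 := by
        rw [sub_self]
        exact min_eq_right (by linarith [hmin i hi])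
      rw [this, mul_zero]
    have hz' : ∀ j ∈ s, v m * v j * min (α m - α m) (α j - α m) = 0 := by
      intro j hj
      have : min (α m - α m) (α j - α m) = 0 := by
        rw [sub_self]
        exact min_eq_left (by linarith [hmin j hj])
      rw [this, mul_zero]
    have hred : (∑ i ∈ s, ∑ j ∈ s, v i * v j * min (α i - α m) (α j - α m)) =
        ∑ i ∈ s.erase m, ∑ j ∈ s.erase m, v i * v j * min (α i - α m) (α j - α m) := by
      rw [← Finset.sum_erase_add s _ hm]
      rw [Finset.sum_eq_zero hz']
      rw [add_zero]
      refine Finset.sum_congr rfl fun i hi => ?_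
      rw [← Finset.sum_erase_add s _ hm, hz i (Finset.mem_of_mem_erase hi), add_zero]
    rw [hred] at *
    have h2 : 0 ≤ ∑ i ∈ s.erase m, ∑ j ∈ s.erase m,
        v i * v j * min (α i - α m) (α j - α m) := by
      refine ih (s.erase m) (Finset.erase_ssubset hm) _ v fun i hi => ?_
      have := hmin i (Finset.mem_of_mem_erase hi); linarith
    linarith

lemma tri_sum {n : ℕ} (s : Finset (Fin n)) (f : Fin n → Fin n → ℝ)
    (hsym : ∀ i j, f i j = f j i) :
    2 * (∑ i ∈ s, ∑ j ∈ s.filter (fun j => i ≤ j), f i j) =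
      (∑ i ∈ s, ∑ j ∈ s, f i j) + ∑ i ∈ s, f i i := by
  have e1 : ∀ i, ∑ j ∈ s.filter (fun j => i ≤ j), f i j
      = ∑ j ∈ s, if i ≤ j then f i j else 0 := fun i => (Finset.sum_filter _ _)
  have full : (∑ i ∈ s, ∑ j ∈ s, f i j) =
      (∑ i ∈ s, ∑ j ∈ s, if i ≤ j then f i j else 0) +
      (∑ i ∈ s, ∑ j ∈ s, if j < i then f i j else 0) := by
    rw [← Finset.sum_add_distrib]
    refine Finset.sum_congr rfl fun i hi => ?_
    rw [← Finset.sum_add_distrib]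
    refine Finset.sum_congr rfl fun j hj => ?_
    rcases le_or_gt i j with h | h
    · simp [h, not_lt.2 h]
    · simp [h, not_le.2 h]
  have swap : (∑ i ∈ s, ∑ j ∈ s, if j < i then f i j else 0) =
      (∑ i ∈ s, ∑ j ∈ s, if i < j then f i j else 0) := by
    rw [Finset.sum_comm]
    refine Finset.sum_congr rfl fun i hi => Finset.sum_congr rfl fun j hj => ?_
    rw [hsym]
  have lt_le : (∑ i ∈ s, ∑ j ∈ s, if i ≤ j then f i j else 0) =
      (∑ i ∈ s, ∑ j ∈ s, if i < j then f i j else 0) + ∑ i ∈ s, f i i := by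
    rw [← Finset.sum_add_distrib]
    refine Finset.sum_congr rfl fun i hi => ?_
    have : (∑ j ∈ s, if i < j then f i j else 0) + f i i
        = ∑ j ∈ s, ((if i < j then f i j else 0) + if i = j then f i j else 0) := by
      rw [Finset.sum_add_distrib]
      congr 1
      rw [Finset.sum_ite_eq s i (fun j => f i j)]  -- might need adjust
      simp [hi]
    rw [this]
    refine Finset.sum_congr rfl fun j hj => ?_
    rcases lt_trichotomy i j with h | h | h
    · simp [h, le_of_lt h, h.ne]
    · simp [h]
    · simp [not_le.2 h, not_lt.2 h.le, h.ne']
  calc 2 * (∑ i ∈ s, ∑ j ∈ s.filter (fun j => i ≤ j), f i j)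
      = (∑ i ∈ s, ∑ j ∈ s, if i ≤ j then f i j else 0)
        + (∑ i ∈ s, ∑ j ∈ s, if i ≤ j then f i j else 0) := by
        rw [two_mul]; congr 1 <;> exact Finset.sum_congr rfl fun i _ => e1 i
    _ = (∑ i ∈ s, ∑ j ∈ s, f i j) + ∑ i ∈ s, f i i := by
        rw [full, swap, lt_le]; ring


/-- Partition inequality for weighted completion time (Lemma 2 of the paper):
for nonnegative weights `w` and ratios `α`, and a partition of `[n]` into `A`, `B`,
the within-part pair sums dominate the cross-part pair sum. -/
theorem partition_min_inequality {n : ℕ} (w α : Fin n → ℝ)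
    (hw : ∀ i, 0 ≤ w i) (hα : ∀ i, 0 ≤ α i)
    (A B : Finset (Fin n)) (hdisj : Disjoint A B) (hcover : A ∪ B = Finset.univ) :
    (∑ i ∈ A, ∑ j ∈ A.filter (fun j => i ≤ j), w i * w j * min (α i) (α j)) +
    (∑ i ∈ B, ∑ j ∈ B.filter (fun j => i ≤ j), w i * w j * min (α i) (α j)) ≥
    ∑ i ∈ A, ∑ j ∈ B, w i * w j * min (α i) (α j) := by
  set K : Fin n → Fin n → ℝ := fun i j => w i * w j * min (α i) (α j) with hK
  have hsym : ∀ i j, K i j = K j i := by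
    intro i j; simp only [hK]; rw [min_comm]; ring
  set v : Fin n → ℝ := fun i => if i ∈ A then 1 else -1 with hv
  have psd : 0 ≤ ∑ i ∈ Finset.univ, ∑ j ∈ Finset.univ,
      (v i * w i) * (v j * w j) * min (α i) (α j) := by
    refine min_kernel_psd Finset.univ α (fun i => v i * w i) fun i _ => hα i
  have hsplit : ∀ g : Fin n → ℝ, ∑ i ∈ Finset.univ, g i = ∑ i ∈ A, g i + ∑ i ∈ B, g i := by
    intro g; rw [← hcover, Finset.sum_union hdisj]
  have hvA : ∀ i ∈ A, v i = 1 := fun i hi => by simp [hv, hi]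
  have hvB : ∀ i ∈ B, v i = -1 := by
    intro i hi
    have : i ∉ A := fun hA => (Finset.disjoint_left.1 hdisj hA) hi
    simp [hv, this]
  have expand : (∑ i ∈ Finset.univ, ∑ j ∈ Finset.univ,
      (v i * w i) * (v j * w j) * min (α i) (α j)) =
      (∑ i ∈ A, ∑ j ∈ A, K i j) + (∑ i ∈ B, ∑ j ∈ B, K i j)
      - (∑ i ∈ A, ∑ j ∈ B, K i j) - (∑ i ∈ B, ∑ j ∈ A, K i j) := by
    rw [hsplit]
    have hrow : ∀ i, (∑ j ∈ Finset.univ, (v i * w i) * (v j * w j) * min (α i) (α j))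
        = ∑ j ∈ A, (v i * w i) * (v j * w j) * min (α i) (α j)
          + ∑ j ∈ B, (v i * w i) * (v j * w j) * min (α i) (α j) := fun i => hsplit _
    simp only [hrow]
    rw [Finset.sum_add_distrib, Finset.sum_add_distrib]
    have eAA : (∑ i ∈ A, ∑ j ∈ A, (v i * w i) * (v j * w j) * min (α i) (α j))
        = ∑ i ∈ A, ∑ j ∈ A, K i j := by
      refine Finset.sum_congr rfl fun i hi => Finset.sum_congr rfl fun j hj => ?_
      rw [hvA i hi, hvA j hj]; simp [hK]
    have eAB : (∑ i ∈ A, ∑ j ∈ B, (v i * w i) * (v j * w j) * min (α i) (α j))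
        = -∑ i ∈ A, ∑ j ∈ B, K i j := by
      rw [← Finset.sum_neg_distrib]
      refine Finset.sum_congr rfl fun i hi => ?_
      rw [← Finset.sum_neg_distrib]
      refine Finset.sum_congr rfl fun j hj => ?_
      rw [hvA i hi, hvB j hj]; simp [hK]
    have eBA : (∑ i ∈ B, ∑ j ∈ A, (v i * w i) * (v j * w j) * min (α i) (α j))
        = -∑ i ∈ B, ∑ j ∈ A, K i j := by
      rw [← Finset.sum_neg_distrib]
      refine Finset.sum_congr rfl fun i hi => ?_
      rw [← Finset.sum_neg_distrib]
      refine Finset.sum_congr rfl fun j hj => ?_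
      rw [hvB i hi, hvA j hj]; simp [hK]
    have eBB : (∑ i ∈ B, ∑ j ∈ B, (v i * w i) * (v j * w j) * min (α i) (α j))
        = ∑ i ∈ B, ∑ j ∈ B, K i j := by
      refine Finset.sum_congr rfl fun i hi => Finset.sum_congr rfl fun j hj => ?_
      rw [hvB i hi, hvB j hj]; simp [hK]
    rw [eAA, eAB, eBA, eBB]; ring
  have hBA : (∑ i ∈ B, ∑ j ∈ A, K i j) = ∑ i ∈ A, ∑ j ∈ B, K i j := by
    rw [Finset.sum_comm]
    exact Finset.sum_congr rfl fun i _ => Finset.sum_congr rfl fun j _ => hsym _ _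
  rw [expand, hBA] at psd
  have tA := tri_sum A K hsym
  have tB := tri_sum B K hsym
  have dA : 0 ≤ ∑ i ∈ A, K i i := by
    refine Finset.sum_nonneg fun i _ => ?_
    exact mul_nonneg (mul_nonneg (hw i) (hw i)) (le_min (hα i) (hα i))
  have dB : 0 ≤ ∑ i ∈ B, K i i := by
    refine Finset.sum_nonneg fun i _ => ?_
    exact mul_nonneg (mul_nonneg (hw i) (hw i)) (le_min (hα i) (hα i))
  have goal2 : 2 * ((∑ i ∈ A, ∑ j ∈ A.filter (fun j => i ≤ j), K i j)
      + (∑ i ∈ B, ∑ j ∈ B.filter (fun j => i ≤ j), K i j))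
      ≥ 2 * ∑ i ∈ A, ∑ j ∈ B, K i j := by
    rw [mul_add, tA, tB]; linarith
  simp only [hK] at goal2 ⊢
  linarith
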